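/- Let b ∈ ℝ with b ≠ 0, c > 0, q > 0, x0 ≥ 0, and let r be a natural number. Assume either (b > 0 and r < b·q) or b < 0. Then the r-th moment of the IF2 distribution, ∫_{x0}^∞ x^r · (|b|q/c) · ((x-x0)/c)^(-b·q-1) · exp(-((x-x0)/c)^(-b·q)) dx, equals Σ_{i=0}^{r} binomial(r,i) · x0^i · c^(r-i) · Γ(1 - (r-i)/(b·q)). -/

import Mathlib

open MeasureTheory Real Set

lemma keyA {p k : ℝ} (hp : p ≠ 0) (hs : 0 < 1 - k / p) :
    ∫ t in Set.Ioi (0:ℝ), t ^ k * (|p| * t ^ (-p - 1) * Real.exp (-t ^ (-p)))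
      = Real.Gamma (1 - k / p) := by
  have hnp : (-p : ℝ) ≠ 0 := neg_ne_zero.mpr hp
  have h := integral_comp_rpow_Ioi
    (fun u => Real.exp (-u) * u ^ (1 - k / p - 1)) hnp
  rw [Real.Gamma_eq_integral hs, ← h]
  refine setIntegral_congr_fun measurableSet_Ioi fun t ht => ?_
  have ht' : (0:ℝ) < t := ht
  have hk : (-p) * (1 - k / p - 1) = k := by field_simp; ring
  rw [smul_eq_mul, ← Real.rpow_mul ht'.le, hk, abs_neg]
  ring

lemma keyB {p k : ℝ} (hp : p ≠ 0) (hs : 0 < 1 - k / p) :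
    IntegrableOn (fun t => t ^ k * (|p| * t ^ (-p - 1) * Real.exp (-t ^ (-p))))
      (Set.Ioi (0:ℝ)) := by
  have hnp : (-p : ℝ) ≠ 0 := neg_ne_zero.mpr hp
  have h := (integrableOn_Ioi_comp_rpow_iff
    (fun u => Real.exp (-u) * u ^ (1 - k / p - 1)) hnp).mpr
    (Real.GammaIntegral_convergent hs)
  refine h.congr_fun (fun t ht => ?_) measurableSet_Ioi
  have ht' : (0:ℝ) < t := ht
  have hk : (-p) * (1 - k / p - 1) = k := by field_simp; ring
  dsimp only
  rw [smul_eq_mul, ← Real.rpow_mul ht'.le, hk, abs_neg]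
  ring

/-- The `r`-th moment of the IF2 distribution. -/
theorem if2_moment (b c q x0 : ℝ) (r : ℕ) (hb : b ≠ 0) (hc : 0 < c) (hq : 0 < q)
    (hx0 : 0 ≤ x0)
    (hcond : (0 < b ∧ (r : ℝ) < b * q) ∨ b < 0) :
    ∫ x in Set.Ioi x0,
        x ^ r * (|b| * q / c * ((x - x0) / c) ^ (-(b * q) - 1) *
          Real.exp (-((x - x0) / c) ^ (-(b * q)))) =
      ∑ i ∈ Finset.range (r + 1),
        (r.choose i : ℝ) * x0 ^ i * c ^ (r - i) *
          Real.Gamma (1 - ((r : ℝ) - i) / (b * q)) := by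
  set p := b * q with hpdef
  have hpne : p ≠ 0 := mul_ne_zero hb hq.ne'
  have hs : ∀ i ∈ Finset.range (r + 1), 0 < 1 - (((r - i : ℕ) : ℝ)) / p := by
    intro i hi
    rcases hcond with ⟨hbpos, hrp⟩ | hbneg
    · have hppos : 0 < p := mul_pos hbpos hq
      have h1 : ((r - i : ℕ) : ℝ) ≤ (r : ℝ) := by exact_mod_cast Nat.cast_le.mpr (Nat.sub_le r i)
      have hlt : ((r - i : ℕ) : ℝ) < p := lt_of_le_of_lt h1 hrp
      have := (div_lt_one hppos).mpr hlt
      linarith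
    · have hpneg : p < 0 := mul_neg_of_neg_of_pos hbneg hq
      have : (((r - i : ℕ) : ℝ)) / p ≤ 0 :=
        div_nonpos_of_nonneg_of_nonpos (Nat.cast_nonneg _) hpneg.le
      linarith
  have habs : |b| * q = |p| := by
    rw [hpdef, abs_mul, abs_of_pos hq]
  -- Step 1: shift x = y + x0
  have hshift := (measurePreserving_add_right volume x0).setIntegral_preimage_emb
    (measurableEmbedding_addRight x0)
    (fun x => x ^ r * (|b| * q / c * ((x - x0) / c) ^ (-p - 1) *
          Real.exp (-((x - x0) / c) ^ (-p)))) (Set.Ioi x0)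
  rw [show (· + x0) ⁻¹' Set.Ioi x0 = Set.Ioi 0 by ext y; simp [Set.mem_preimage]] at hshift
  rw [← hshift]
  simp only [add_sub_cancel_right]
  -- Step 2: scale y = c * t
  have hscale := integral_comp_mul_left_Ioi
    (fun y => (y + x0) ^ r * (|b| * q / c * (y / c) ^ (-p - 1) *
      Real.exp (-(y / c) ^ (-p)))) 0 hc
  rw [mul_zero] at hscale
  have step2 : (∫ y in Set.Ioi (0:ℝ), (y + x0) ^ r * (|b| * q / c * (y / c) ^ (-p - 1) *
        Real.exp (-(y / c) ^ (-p))))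
      = c • ∫ t in Set.Ioi (0:ℝ), ((c * t + x0) ^ r * (|b| * q / c * ((c * t) / c) ^ (-p - 1) *
        Real.exp (-((c * t) / c) ^ (-p)))) := by
    rw [hscale, smul_smul, mul_inv_cancel₀ hc.ne', one_smul]
  rw [step2]
  -- Step 3: simplify and expand the binomial
  have step3 : (∫ t in Set.Ioi (0:ℝ), ((c * t + x0) ^ r * (|b| * q / c * ((c * t) / c) ^ (-p - 1) *
        Real.exp (-((c * t) / c) ^ (-p)))))
      = ∫ t in Set.Ioi (0:ℝ), ∑ i ∈ Finset.range (r + 1),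
          ((r.choose i : ℝ) * x0 ^ i * c ^ (r - i) * c⁻¹) *
            (t ^ (((r - i : ℕ) : ℝ)) * (|p| * t ^ (-p - 1) * Real.exp (-t ^ (-p)))) := by
    refine setIntegral_congr_fun measurableSet_Ioi fun t ht => ?_
    rw [mul_div_cancel_left₀ _ hc.ne']
    rw [show c * t + x0 = x0 + c * t by ring, add_pow, Finset.sum_mul]
    refine Finset.sum_congr rfl fun i hi => ?_
    rw [Real.rpow_natCast, mul_pow, habs]
    ring
  rw [step3, integral_finset_sum _ (fun i hi => ((keyB hpne (hs i hi)).const_mul _)),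
    smul_eq_mul, Finset.mul_sum]
  refine Finset.sum_congr rfl fun i hi => ?_
  rw [integral_const_mul _ _, keyA hpne (hs i hi)]
  have hcast : ((r - i : ℕ) : ℝ) = (r : ℝ) - (i : ℝ) := by
    exact Nat.cast_sub (Finset.mem_range_succ_iff.mp hi)
  rw [hcast]
  field_simp
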